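/- Let σ be a lock-well-formed execution, S a set of read/write events of σ, and e1, e2 events of σ with t1 = ThreadOf(e1) ≠ ThreadOf(e2). Suppose U′ : Threads(σ) → ℕ satisfies U′ ⊑ U(e2) and U(e1)(t1) ≤ U′(t1). Then Csmp(e1) ⊑ Csmp(e2). -/

import Mathlib

open scoped Classical

noncomputable section

/-- An operation: read/write of a memory location, or acquire/release of a lock. -/
inductive Op : Type where
  | read (x : ℕ)
  | write (x : ℕ)
  | acq (l : ℕ)
  | rel (l : ℕ)
  deriving DecidableEq

/-- An execution: a finite sequence of (pairwise-distinct) events, each with a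
thread identifier and an operation.  Events are identified with their index
in the sequence, so trace order is the order on `Fin n`. -/
structure Execution : Type where
  n : ℕ
  thread : Fin n → ℕ
  op : Fin n → Op

/-- `o` is a release operation. -/
def Op.isRel (o : Op) : Prop := ∃ l, o = Op.rel l

/-- `o` is a read or write operation. -/
def Op.isAccess (o : Op) : Prop := ∃ x, o = Op.read x ∨ o = Op.write x

/-- `o` accesses memory location `x`. -/
def Op.accesses (o : Op) (x : ℕ) : Prop := o = Op.read x ∨ o = Op.write x

namespace Execution

/-- Event `e` operates on lock `l`. -/
def touches (σ : Execution) (l : ℕ) (e : Fin σ.n) : Prop :=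
  σ.op e = Op.acq l ∨ σ.op e = Op.rel l

/-- Lock-well-formedness: for every lock `l`, the subsequence of events on `l`
alternates acquires and releases beginning with an acquire (an event on `l` is
an acquire iff an even number of events on `l` precede it), and each release of
`l` is performed by the same thread as the immediately preceding acquire of `l`. -/
def LockWellFormed (σ : Execution) : Prop :=
  ∀ l : ℕ, ∀ e : Fin σ.n, σ.touches l e →
    ((σ.op e = Op.acq l ↔
        Even ((Finset.univ.filter (fun f => f < e ∧ σ.touches l f)).card)) ∧
     (σ.op e = Op.rel l →
        ∃ f : Fin σ.n, f < e ∧ σ.op f = Op.acq l ∧ σ.thread f = σ.thread e ∧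
          ∀ g : Fin σ.n, f < g → g < e → ¬ σ.touches l g))

/-- Nonstrict thread order `e1 ≤tho e2`. -/
def tho (σ : Execution) (e1 e2 : Fin σ.n) : Prop :=
  e1 ≤ e2 ∧ σ.thread e1 = σ.thread e2

/-- Strict thread order `e1 <tho e2`. -/
def sTho (σ : Execution) (e1 e2 : Fin σ.n) : Prop :=
  e1 < e2 ∧ σ.thread e1 = σ.thread e2

/-- One step of happens-before: thread order, or a release–acquire edge. -/
def hbStep (σ : Execution) (e1 e2 : Fin σ.n) : Prop :=
  σ.tho e1 e2 ∨ (e1 < e2 ∧ ∃ l, σ.op e1 = Op.rel l ∧ σ.op e2 = Op.acq l)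

/-- Happens-before: reflexive-transitive closure of thread order together
with release–acquire edges. -/
def hb (σ : Execution) : Fin σ.n → Fin σ.n → Prop :=
  Relation.ReflTransGen σ.hbStep

/-- The (finite) set of threads of the events of `σ`. -/
def threads (σ : Execution) : Finset ℕ :=
  Finset.univ.image σ.thread

/-- Local time `Lft(e)`: 1 plus the number of release events thread-order
before `e`. -/
def Lft (σ : Execution) (e : Fin σ.n) : ℕ :=
  (Finset.univ.filter (fun f => (σ.op f).isRel ∧ σ.sTho f e)).card + 1

/-- FastTrack timestamp `Cft(e)(t)`: max of `Lft(f)` over events `f` of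
thread `t` with `f ≤HB e` (0 if there are none). -/
def Cft (σ : Execution) (e : Fin σ.n) (t : ℕ) : ℕ :=
  (Finset.univ.filter (fun f => σ.thread f = t ∧ σ.hb f e)).sup σ.Lft

/-- `T1 ⊑ T2`: pointwise comparison over the threads of `σ`. -/
def VCle (σ : Execution) (T1 T2 : ℕ → ℕ) : Prop :=
  ∀ t ∈ σ.threads, T1 t ≤ T2 t

/-- `(e1, e2)` is a conflicting pair (with `e1 <tr e2`). -/
def Conflicting (σ : Execution) (e1 e2 : Fin σ.n) : Prop :=
  e1 < e2 ∧ σ.thread e1 ≠ σ.thread e2 ∧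
    ∃ x, (σ.op e1).accesses x ∧ (σ.op e2).accesses x ∧
      (σ.op e1 = Op.write x ∨ σ.op e2 = Op.write x)

/-- `(e1, e2)` is an HB-race. -/
def HBRace (σ : Execution) (e1 e2 : Fin σ.n) : Prop :=
  σ.Conflicting e1 e2 ∧ ¬ σ.hb e1 e2

/-- `RelAfter S`: release events that are the first release after some
sampled event, in the same thread. -/
def RelAfter (σ : Execution) (S : Finset (Fin σ.n)) : Finset (Fin σ.n) :=
  Finset.univ.filter (fun f => (σ.op f).isRel ∧
    ∃ e ∈ S, σ.sTho e f ∧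
      ∀ g : Fin σ.n, (σ.op g).isRel → σ.sTho e g → ¬ σ.sTho g f)

/-- Sampling local time `Lsmp(e)`: 1 plus the number of events of `RelAfter S`
thread-order before `e`. -/
def Lsmp (σ : Execution) (S : Finset (Fin σ.n)) (e : Fin σ.n) : ℕ :=
  ((σ.RelAfter S).filter (fun f => σ.sTho f e)).card + 1

/-- Sampling timestamp `Csmp(e)(t)`: max of `Lsmp(f)` over sampled events `f`
of thread `t` with `f ≤HB e` (0 if there are none). -/
def Csmp (σ : Execution) (S : Finset (Fin σ.n)) (e : Fin σ.n) (t : ℕ) : ℕ :=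
  (S.filter (fun f => σ.thread f = t ∧ σ.hb f e)).sup (σ.Lsmp S)

/-- `Csmp⁻(f)`: the sampling timestamp of the immediate thread-order
predecessor of `f`, or the all-zero timestamp if `f` is the first event of
its thread. -/
def CsmpPrev (σ : Execution) (S : Finset (Fin σ.n)) (f : Fin σ.n) : ℕ → ℕ :=
  if h : ∃ f' : Fin σ.n, σ.sTho f' f ∧ ∀ g : Fin σ.n, σ.sTho f' g → ¬ σ.sTho g f
  then σ.Csmp S h.choose
  else fun _ => 0

/-- `VT(e)`: total number of component updates of the sampling timestamp along
the thread of `e`, up to and including `e`. -/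
def VT (σ : Execution) (S : Finset (Fin σ.n)) (e : Fin σ.n) : ℕ :=
  ∑ f ∈ Finset.univ.filter (fun f => σ.tho f e),
    ((σ.threads).filter (fun t => σ.Csmp S f t ≠ σ.CsmpPrev S f t)).card

/-- Freshness timestamp `U(e)(t)`: max of `VT(f)` over events `f` of thread
`t` with `f ≤HB e` (0 if there are none). -/
def Ufr (σ : Execution) (S : Finset (Fin σ.n)) (e : Fin σ.n) (t : ℕ) : ℕ :=
  (Finset.univ.filter (fun f => σ.thread f = t ∧ σ.hb f e)).sup (σ.VT S)

end Execution

namespace Execution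

variable (σ : Execution) (S : Finset (Fin σ.n))

lemma tho_refl (e : Fin σ.n) : σ.tho e e := ⟨le_refl _, rfl⟩

lemma tho_trans {a b c : Fin σ.n} (h1 : σ.tho a b) (h2 : σ.tho b c) : σ.tho a c :=
  ⟨le_trans h1.1 h2.1, h1.2.trans h2.2⟩

lemma hb_refl (e : Fin σ.n) : σ.hb e e := Relation.ReflTransGen.refl

lemma csmp_mono {a b : Fin σ.n} (h : σ.hb a b) (t : ℕ) :
    σ.Csmp S a t ≤ σ.Csmp S b t := by
  apply Finset.sup_mono
  intro x hx
  simp only [Finset.mem_filter] at hx ⊢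
  exact ⟨hx.1, hx.2.1, hx.2.2.trans h⟩

lemma vt_mono {a b : Fin σ.n} (h : σ.tho a b) : σ.VT S a ≤ σ.VT S b := by
  apply Finset.sum_le_sum_of_subset
  intro x hx
  simp only [Finset.mem_filter, Finset.mem_univ, true_and] at hx ⊢
  exact σ.tho_trans hx h

/-- If all updates between `f` (exclusive) and `e` (inclusive) vanish on the
threads of `σ`, then `Csmp e = Csmp f` on the threads of `σ`. -/
lemma csmp_eq_of_no_updates :
    ∀ k : ℕ, ∀ e f : Fin σ.n, (e : ℕ) < k → σ.tho f e →
      (∀ g, σ.sTho f g → σ.tho g e → ∀ t ∈ σ.threads,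
        σ.Csmp S g t = σ.CsmpPrev S g t) →
      ∀ t ∈ σ.threads, σ.Csmp S e t = σ.Csmp S f t := by
  intro k
  induction k with
  | zero => intro e f h; omega
  | succ k ih =>
    intro e f hk hfe hupd t ht
    rcases eq_or_lt_of_le hfe.1 with heq | hlt
    · rw [Fin.le_antisymm hfe.1 heq.ge]
    · -- f < e; use the immediate predecessor of e
      have hex : ∃ f' : Fin σ.n, σ.sTho f' e ∧
          ∀ g : Fin σ.n, σ.sTho f' g → ¬ σ.sTho g e := by
        classical
        have hne : (Finset.univ.filter (fun g => σ.sTho g e)).Nonempty :=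
          ⟨f, Finset.mem_filter.mpr ⟨Finset.mem_univ _, hlt, hfe.2⟩⟩
        obtain ⟨p, hpmem, hpmax⟩ := Finset.exists_max_image _ id hne
        simp only [Finset.mem_filter, Finset.mem_univ, true_and] at hpmem
        refine ⟨p, hpmem, fun g hpg hge => ?_⟩
        have := hpmax g (by simp [hge])
        exact absurd hpg.1 (not_lt.mpr this)
      have hCsmpPrev : σ.CsmpPrev S e = σ.Csmp S hex.choose := by
        rw [Execution.CsmpPrev, dif_pos hex]
      set p := hex.choose with hp
      obtain ⟨hpe, hpimm⟩ := hex.choose_spec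
      have hfp : σ.tho f p := by
        refine ⟨?_, hfe.2.trans hpe.2.symm⟩
        by_contra hnp
        push_neg at hnp
        exact hpimm f ⟨hnp, hpe.2.trans hfe.2.symm⟩ ⟨hlt, hfe.2⟩
      have h1 : σ.Csmp S e t = σ.Csmp S p t := by
        rw [hupd e ⟨hlt, hfe.2⟩ (σ.tho_refl e) t ht, hCsmpPrev]
      rw [h1]
      have hpk : (p : ℕ) < k := by
        have h2 : (p : ℕ) < (e : ℕ) := hpe.1
        omega
      exact ih p f hpk hfp
        (fun g hg1 hg2 => hupd g hg1 (σ.tho_trans hg2 ⟨hpe.1.le, hpe.2⟩)) t ht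

/-- If all updates up to `e` (inclusive) vanish on the threads of `σ`,
then `Csmp e = 0` on the threads of `σ`. -/
lemma csmp_eq_zero_of_no_updates :
    ∀ k : ℕ, ∀ e : Fin σ.n, (e : ℕ) < k →
      (∀ g, σ.tho g e → ∀ t ∈ σ.threads,
        σ.Csmp S g t = σ.CsmpPrev S g t) →
      ∀ t ∈ σ.threads, σ.Csmp S e t = 0 := by
  intro k
  induction k with
  | zero => intro e h; omega
  | succ k ih =>
    intro e hk hupd t ht
    rw [hupd e (σ.tho_refl e) t ht, Execution.CsmpPrev]
    split
    · next hex =>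
      obtain ⟨hpe, _⟩ := hex.choose_spec
      have hpk : (hex.choose : ℕ) < k := by
        have h2 : (hex.choose : ℕ) < (e : ℕ) := hpe.1
        omega
      exact ih hex.choose hpk
        (fun g hg => hupd g (σ.tho_trans hg ⟨hpe.1.le, hpe.2⟩)) t ht
    · next => rfl

/-- If `f ≤tho e` and `VT e ≤ VT f`, then all updates strictly between them vanish. -/
lemma no_updates_of_vt_le {e f : Fin σ.n} (hfe : σ.tho f e)
    (hvt : σ.VT S e ≤ σ.VT S f) :
    ∀ g, σ.sTho f g → σ.tho g e → ∀ t ∈ σ.threads,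
      σ.Csmp S g t = σ.CsmpPrev S g t := by
  classical
  intro g hfg hge t ht
  set F := fun a : Fin σ.n => Finset.univ.filter (fun x => σ.tho x a) with hF
  have hsub : F f ⊆ F e := by
    intro x hx
    simp only [hF, Finset.mem_filter, Finset.mem_univ, true_and] at hx ⊢
    exact σ.tho_trans hx hfe
  have hsdiff := Finset.sum_sdiff (f := fun x =>
    ((σ.threads).filter (fun t => σ.Csmp S x t ≠ σ.CsmpPrev S x t)).card) hsub
  have hVTe : σ.VT S e = ∑ x ∈ F e, _ := rfl
  have hVTf : σ.VT S f = ∑ x ∈ F f, _ := rfl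
  have hz : ∑ x ∈ F e \ F f,
      ((σ.threads).filter (fun t => σ.Csmp S x t ≠ σ.CsmpPrev S x t)).card = 0 := by
    have h1 : σ.VT S e = ∑ x ∈ F e \ F f,
        ((σ.threads).filter (fun t => σ.Csmp S x t ≠ σ.CsmpPrev S x t)).card
        + σ.VT S f := by
      rw [Execution.VT, Execution.VT, ← hsdiff]
    omega
  have hgmem : g ∈ F e \ F f := by
    simp only [hF, Finset.mem_sdiff, Finset.mem_filter, Finset.mem_univ, true_and]
    exact ⟨hge, fun hgf => absurd hgf.1 (not_le.mpr hfg.1)⟩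
  have := (Finset.sum_eq_zero_iff.mp hz) g hgmem
  have hempty := Finset.card_eq_zero.mp this
  by_contra hne
  have : t ∈ (σ.threads).filter (fun t => σ.Csmp S g t ≠ σ.CsmpPrev S g t) :=
    Finset.mem_filter.mpr ⟨ht, hne⟩
  rw [hempty] at this
  exact absurd this (Finset.notMem_empty t)

end Execution

/-- For events `e1, e2` of different threads with
`t1 = ThreadOf e1`, if `U' ⊑ U(e2)` and `U(e1)(t1) ≤ U'(t1)`, then
`Csmp(e1) ⊑ Csmp(e2)`. -/
theorem stmt19 (σ : Execution) (hwf : σ.LockWellFormed)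
    (S : Finset (Fin σ.n)) (hS : ∀ e ∈ S, (σ.op e).isAccess)
    (e1 e2 : Fin σ.n) (hne : σ.thread e1 ≠ σ.thread e2)
    (U' : ℕ → ℕ) (hU1 : σ.VCle U' (σ.Ufr S e2))
    (hU2 : σ.Ufr S e1 (σ.thread e1) ≤ U' (σ.thread e1)) :
    σ.VCle (σ.Csmp S e1) (σ.Csmp S e2) := by
  classical
  intro t ht
  set t1 := σ.thread e1 with ht1
  have ht1mem : t1 ∈ σ.threads := Finset.mem_image_of_mem σ.thread (Finset.mem_univ e1)
  -- VT e1 ≤ Ufr e2 t1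
  have hVTe1 : σ.VT S e1 ≤ σ.Ufr S e1 t1 :=
    Finset.le_sup (Finset.mem_filter.mpr ⟨Finset.mem_univ _, rfl, σ.hb_refl e1⟩)
  have hVT : σ.VT S e1 ≤ σ.Ufr S e2 t1 :=
    le_trans hVTe1 (le_trans hU2 (hU1 t1 ht1mem))
  set A := Finset.univ.filter (fun f => σ.thread f = t1 ∧ σ.hb f e2) with hA
  rcases A.eq_empty_or_nonempty with hAe | hAne
  · -- Ufr e2 t1 = 0, so VT e1 = 0 and Csmp e1 = 0 on threads
    have h0 : σ.Ufr S e2 t1 = 0 := by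
      rw [Execution.Ufr, ← hA, hAe, Finset.sup_empty]
      rfl
    have hVT0 : σ.VT S e1 = 0 := by omega
    have hupd : ∀ g, σ.tho g e1 → ∀ t ∈ σ.threads,
        σ.Csmp S g t = σ.CsmpPrev S g t := by
      intro g hg t' ht'
      have := (Finset.sum_eq_zero_iff.mp hVT0) g (by simpa using hg)
      have hempty := Finset.card_eq_zero.mp this
      by_contra hnee
      have : t' ∈ (σ.threads).filter (fun t => σ.Csmp S g t ≠ σ.CsmpPrev S g t) :=
        Finset.mem_filter.mpr ⟨ht', hnee⟩
      rw [hempty] at this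
      exact absurd this (Finset.notMem_empty t')
    have := σ.csmp_eq_zero_of_no_updates S ((e1 : ℕ) + 1) e1 (by omega) hupd t ht
    omega
  · obtain ⟨f, hfA, hfsup⟩ := Finset.exists_mem_eq_sup A hAne (σ.VT S)
    simp only [hA, Finset.mem_filter, Finset.mem_univ, true_and] at hfA
    obtain ⟨hft, hfhb⟩ := hfA
    have hVTf : σ.VT S e1 ≤ σ.VT S f := by
      have : σ.Ufr S e2 t1 = σ.VT S f := hfsup
      omega
    rcases le_or_gt e1 f with hle | hltf
    · -- e1 ≤tho f ≤HB e2
      have hhb1 : σ.hb e1 f :=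
        Relation.ReflTransGen.single (Or.inl ⟨hle, hft.symm⟩)
      exact le_trans (σ.csmp_mono S hhb1 t) (σ.csmp_mono S hfhb t)
    · -- f <tho e1, VT f = VT e1, no updates in between
      have hfe1 : σ.tho f e1 := ⟨hltf.le, hft⟩
      have heq := σ.csmp_eq_of_no_updates S ((e1 : ℕ) + 1) e1 f (by omega) hfe1
        (σ.no_updates_of_vt_le S hfe1 hVTf) t ht
      rw [heq]
      exact σ.csmp_mono S hfhb t
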